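/- For every n > 1, the family of all 2^n indicator functions {I_z : z ∈ 𝔽₂^n}, viewed as one (n, 2^n)-function, has multiplicative complexity exactly 2^n − n − 1 with respect to XOR-AND circuits. -/

import Mathlib

/-- An instruction of an XOR-AND straight-line circuit: an input variable,
the constant 1, an XOR of two previous wires, or an AND of two previous wires.
(Unbounded-fanin XOR is simulated, for free, by binary XORs.) -/
inductive Instr where
  | var : ℕ → Instr
  | one : Instr
  | xor : ℕ → ℕ → Instr
  | and : ℕ → ℕ → Instr

def Instr.isAnd : Instr → Bool
  | .and _ _ => true
  | _ => false

/-- Value of one instruction, given input `x` and previously computed wire values. -/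
def stepEval (n : ℕ) (x : Fin n → ZMod 2) (vals : List (ZMod 2)) : Instr → ZMod 2
  | .var i => if h : i < n then x ⟨i, h⟩ else 0
  | .one => 1
  | .xor a b => vals.getD a 0 + vals.getD b 0
  | .and a b => vals.getD a 0 * vals.getD b 0

/-- The list of all wire values of the circuit `P` on input `x`. -/
def evalProg (n : ℕ) (x : Fin n → ZMod 2) (P : List Instr) : List (ZMod 2) :=
  P.foldl (fun vals ins => vals ++ [stepEval n x vals ins]) []

/-- Number of AND gates in the circuit. -/
def andCount (P : List Instr) : ℕ := (P.filter Instr.isAnd).length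

/-- The circuit `P` with output wires `out` computes the `(n,m)`-function `f`. -/
def Computes (n m : ℕ) (P : List Instr) (out : Fin m → ℕ)
    (f : (Fin n → ZMod 2) → Fin m → ZMod 2) : Prop :=
  ∀ x i, (evalProg n x P).getD (out i) 0 = f x i

/-- The circuit `P` with output wire `out` computes the `(n,1)`-function `f`. -/
def Computes1 (n : ℕ) (P : List Instr) (out : ℕ)
    (f : (Fin n → ZMod 2) → ZMod 2) : Prop :=
  ∀ x, (evalProg n x P).getD out 0 = f x

-- infrastructure
lemma evalProg_append (n x) (L1 L2 : List Instr) :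
    evalProg n x (L1 ++ L2) =
      L2.foldl (fun vals ins => vals ++ [stepEval n x vals ins]) (evalProg n x L1) := by
  simp [evalProg, List.foldl_append]

lemma foldl_prefix (n x) (L : List Instr) (init : List (ZMod 2)) :
    ∃ t, L.foldl (fun vals ins => vals ++ [stepEval n x vals ins]) init = init ++ t := by
  induction L generalizing init with
  | nil => exact ⟨[], by simp⟩
  | cons a L ih =>
    obtain ⟨t, ht⟩ := ih (init ++ [stepEval n x init a])
    exact ⟨stepEval n x init a :: t, by simpa using ht⟩

lemma evalProg_concat (n x) (L : List Instr) (a : Instr) :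
    evalProg n x (L ++ [a]) = evalProg n x L ++ [stepEval n x (evalProg n x L) a] := by
  simp [evalProg_append]

lemma length_evalProg (n x) (P : List Instr) : (evalProg n x P).length = P.length := by
  induction P using List.reverseRecOn with
  | nil => rfl
  | append_singleton L a ih => simp [evalProg_concat, ih]

lemma getD_evalProg_prefix (n x) (L1 L2 : List Instr) {j : ℕ} (hj : j < L1.length) :
    (evalProg n x (L1 ++ L2)).getD j 0 = (evalProg n x L1).getD j 0 := by
  obtain ⟨t, ht⟩ := foldl_prefix n x L2 (evalProg n x L1)
  rw [evalProg_append, ht, List.getD_append]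
  rwa [length_evalProg]

lemma getD_evalProg_take (n x) (P : List Instr) {a j : ℕ} (ha : a < j) (hj : j ≤ P.length) :
    (evalProg n x (P.take j)).getD a 0 = (evalProg n x P).getD a 0 := by
  conv_rhs => rw [← List.take_append_drop j P]
  rw [getD_evalProg_prefix]
  rwa [List.length_take, min_eq_left hj]

lemma wire_recurrence (n x) (P : List Instr) {j : ℕ} (hj : j < P.length) :
    (evalProg n x P).getD j 0 =
      stepEval n x (evalProg n x (P.take j)) (P.getD j Instr.one) := by
  have h1 : P.take (j+1) = P.take j ++ [P.getD j Instr.one] := by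
    rw [List.getD_eq_getElem _ _ hj]
    rw [List.take_succ, List.getElem?_eq_getElem hj]
    rfl
  have h2 : (evalProg n x P).getD j 0 = (evalProg n x (P.take (j+1))).getD j 0 := by
    conv_lhs => rw [← List.take_append_drop (j+1) P]
    rw [getD_evalProg_prefix]
    rw [List.length_take]; omega
  rw [h2, h1, evalProg_concat, List.getD_append_right]
  · have : (evalProg n x (P.take j)).length = j := by
      rw [length_evalProg, List.length_take]; omega
    simp [this]
  · rw [length_evalProg, List.length_take]; omega

-- index counting lemma
lemma idx_count (p : Instr → Bool) (d : Instr) (l : List Instr) :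
    ((Finset.range l.length).filter (fun j => p (l.getD j d))).card = l.countP p := by
  induction l using List.reverseRecOn with
  | nil => simp
  | append_singleton L a ih =>
    have hlen : (L ++ [a]).length = L.length + 1 := by simp
    rw [hlen, Finset.range_add_one, Finset.filter_insert]
    have hgd : (L ++ [a]).getD L.length d = a := by
      rw [List.getD_append_right _ _ _ _ (le_refl _)]; simp
    have hfilter : (Finset.range L.length).filter (fun j => p ((L ++ [a]).getD j d))
        = (Finset.range L.length).filter (fun j => p (L.getD j d)) := by
      apply Finset.filter_congr
      intro j hj
      rw [List.getD_append _ _ _ _ (Finset.mem_range.mp hj)]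
    rw [hgd, List.countP_append, hfilter]
    by_cases hp : p a = true
    · rw [if_pos hp, Finset.card_insert_of_notMem (by simp), ih]
      simp [List.countP_cons, hp]
    · rw [if_neg hp, ih]
      simp [List.countP_cons, hp]

-- lower bound
theorem lower_bound (n : ℕ) (hn : 1 < n) (P : List Instr) (out : (Fin n → ZMod 2) → ℕ)
    (h : ∀ x z, (evalProg n x P).getD (out z) 0 = if x = z then 1 else 0) :
    2 ^ n - n - 1 ≤ andCount P := by
  classical
  set V := (Fin n → ZMod 2) → ZMod 2 with hV
  let W : ℕ → V := fun j x => (evalProg n x P).getD j 0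
  let andIdx : Finset ℕ := (Finset.range P.length).filter (fun j => (P.getD j Instr.one).isAnd)
  let s : Finset V := {fun _ => 1} ∪ (Finset.univ.image (fun i : Fin n => (fun x => x i : V)))
      ∪ andIdx.image W
  let G : Submodule (ZMod 2) V := Submodule.span (ZMod 2) (s : Set V)
  have hW : ∀ j, W j ∈ G := by
    intro j
    induction j using Nat.strong_induction_on with
    | _ j ih =>
      by_cases hj : j < P.length
      · have hrec : W j = fun x => stepEval n x (evalProg n x (P.take j)) (P.getD j Instr.one) := by
          funext x; exact wire_recurrence n x P hj
        have hoperand : ∀ a : ℕ, (fun x => (evalProg n x (P.take j)).getD a 0)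
            = (if a < j then W a else 0) := by
          intro a
          by_cases ha : a < j
          · rw [if_pos ha]; funext x
            exact getD_evalProg_take n x P ha (le_of_lt hj)
          · rw [if_neg ha]; funext x
            have : (evalProg n x (P.take j)).length ≤ a := by
              rw [length_evalProg, List.length_take]; omega
            rw [List.getD_eq_default _ _ this]; rfl
        have hop_mem : ∀ a : ℕ, (fun x => (evalProg n x (P.take j)).getD a 0 : V) ∈ G := by
          intro a
          rw [hoperand a]
          by_cases ha : a < j
          · rw [if_pos ha]; exact ih a ha
          · rw [if_neg ha]; exact Submodule.zero_mem G
        cases hins : P.getD j Instr.one with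
        | var i =>
          rw [hrec]
          simp only [hins, stepEval]
          by_cases hi : i < n
          · simp only [dif_pos hi]
            apply Submodule.subset_span
            simp only [s, Finset.coe_union, Set.mem_union]
            left; right
            simp only [Finset.coe_image, Set.mem_image]
            exact ⟨⟨i, hi⟩, by simp⟩
          · simp only [dif_neg hi]
            exact Submodule.zero_mem G
        | one =>
          rw [hrec]
          simp only [hins, stepEval]
          apply Submodule.subset_span
          simp [s]
        | xor a b =>
          rw [hrec]
          simp only [hins, stepEval]
          exact Submodule.add_mem G (hop_mem a) (hop_mem b)
        | and a b =>
          apply Submodule.subset_span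
          simp only [s, Finset.coe_union, Set.mem_union]
          right
          simp only [Finset.coe_image, Set.mem_image, Finset.mem_coe]
          refine ⟨j, ?_, rfl⟩
          simp only [andIdx, Finset.mem_filter, Finset.mem_range]
          exact ⟨hj, by rw [hins]; rfl⟩
      · have : W j = 0 := by
          funext x
          have : (evalProg n x P).length ≤ j := by rw [length_evalProg]; omega
          show (evalProg n x P).getD j 0 = 0
          rw [List.getD_eq_default _ _ this]
        rw [this]; exact Submodule.zero_mem G
  have hGtop : G = ⊤ := by
    rw [eq_top_iff, ← (Pi.basisFun (ZMod 2) (Fin n → ZMod 2)).span_eq]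
    apply Submodule.span_le.mpr
    rintro _ ⟨z, rfl⟩
    have : (Pi.basisFun (ZMod 2) (Fin n → ZMod 2)) z = W (out z) := by
      rw [Pi.basisFun_apply]
      funext x
      rw [Pi.single_apply]
      exact (h x z).symm
    rw [this]
    exact hW (out z)
  have hrank : (2 : ℕ) ^ n ≤ s.card := by
    have h1 : Module.finrank (ZMod 2) V = 2 ^ n := by
      show Module.finrank (ZMod 2) ((Fin n → ZMod 2) → ZMod 2) = 2 ^ n
      rw [Module.finrank_fintype_fun_eq_card]
      simp [Fintype.card_fun]
    have h2 := finrank_span_le_card (R := ZMod 2) (s : Set V)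
    rw [← h1]
    calc Module.finrank (ZMod 2) V = Module.finrank (ZMod 2) G := by
          rw [hGtop]; exact (finrank_top _ _).symm
      _ ≤ (s : Set V).toFinset.card := h2
      _ = s.card := by simp
  have hcard : s.card ≤ 1 + n + andCount P := by
    calc s.card ≤ ({fun _ => 1} ∪ (Finset.univ.image (fun i : Fin n => (fun x => x i : V))) : Finset V).card
          + (andIdx.image W).card := Finset.card_union_le _ _
      _ ≤ (({fun _ => 1} : Finset V).card + (Finset.univ.image (fun i : Fin n => (fun x => x i : V))).card)
          + (andIdx.image W).card := by
            exact Nat.add_le_add_right (Finset.card_union_le _ _) _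
      _ ≤ (1 + n) + andCount P := by
          apply Nat.add_le_add
          · apply Nat.add_le_add
            · simp
            · exact le_trans (Finset.card_image_le) (by simp)
          · refine le_trans (Finset.card_image_le) ?_
            rw [idx_count Instr.isAnd Instr.one P]
            rw [andCount, ← List.countP_eq_length_filter]
  omega

-- ## Upper bound: bit lemmas
lemma sum_range_two_pow (a : ℕ) : ∑ j ∈ Finset.range a, 2^j = 2^a - 1 := by
  induction a with
  | zero => simp
  | succ a ih =>
    rw [Finset.sum_range_succ, ih]
    have : 1 ≤ 2^a := Nat.one_le_two_pow
    have : (2:ℕ)^(a+1) = 2^a + 2^a := by ring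
    omega

lemma sum_two_pow_lt {S : Finset ℕ} {a : ℕ} (h : ∀ b ∈ S, b < a) : ∑ j ∈ S, 2^j < 2^a := by
  have hsub : S ⊆ Finset.range a := fun b hb => Finset.mem_range.mpr (h b hb)
  have h1 : ∑ j ∈ S, 2^j ≤ ∑ j ∈ Finset.range a, 2^j :=
    Finset.sum_le_sum_of_subset hsub
  rw [sum_range_two_pow] at h1
  have h2 : 1 ≤ (2:ℕ)^a := Nat.one_le_two_pow
  omega

lemma testBit_finsetSum (S : Finset ℕ) (i : ℕ) :
    (∑ j ∈ S, 2^j).testBit i = decide (i ∈ S) := by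
  induction S using Finset.induction_on_max with
  | empty => simp
  | insert a S ha ih =>
    have hlt : ∑ j ∈ S, 2^j < 2^a := sum_two_pow_lt ha
    rw [Finset.sum_insert (fun h => absurd (ha a h) (lt_irrefl a))]
    rcases lt_trichotomy i a with hi | rfl | hi
    · rw [Nat.testBit_two_pow_add_gt hi, ih]
      have hne : i ≠ a := by omega
      simp [Finset.mem_insert, hne]
    · rw [Nat.testBit_two_pow_add_eq, Nat.testBit_lt_two_pow hlt]
      simp
    · have h1 : 2^a + ∑ j ∈ S, 2^j < 2^i := by
        have h2 : (2:ℕ)^(a+1) ≤ 2^i := Nat.pow_le_pow_right (by norm_num) hi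
        have h3 : (2:ℕ)^(a+1) = 2^a + 2^a := by ring
        omega
      rw [Nat.testBit_lt_two_pow h1]
      have hne : i ≠ a := by omega
      have : i ∉ S := fun h => absurd (ha i h) (by omega)
      simp [Finset.mem_insert, hne, this]

/-- Encoding of a subset of `Fin n` as a natural number. -/
def eS {n : ℕ} (S : Finset (Fin n)) : ℕ := ∑ i ∈ S, 2^(i : ℕ)

lemma eS_eq_image {n : ℕ} (S : Finset (Fin n)) : eS S = ∑ j ∈ S.image (Fin.val), 2^j := by
  rw [Finset.sum_image (fun a _ b _ h => Fin.val_injective h)]; rfl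

lemma eS_testBit {n : ℕ} (S : Finset (Fin n)) (i : ℕ) :
    (eS S).testBit i = decide (∃ hi : i < n, (⟨i, hi⟩ : Fin n) ∈ S) := by
  rw [eS_eq_image, testBit_finsetSum]
  congr 1
  simp only [eq_iff_iff, Finset.mem_image]
  constructor
  · rintro ⟨⟨a, ha⟩, hmem, rfl⟩; exact ⟨ha, hmem⟩
  · rintro ⟨hi, hmem⟩; exact ⟨⟨i, hi⟩, hmem, rfl⟩

lemma eS_testBit_fin {n : ℕ} (S : Finset (Fin n)) (i : Fin n) :
    (eS S).testBit (i : ℕ) = decide (i ∈ S) := by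
  rw [eS_testBit]
  simp [i.isLt]

lemma eS_lt {n : ℕ} (S : Finset (Fin n)) : eS S < 2^n := by
  rw [eS_eq_image]
  apply sum_two_pow_lt
  intro b hb
  simp only [Finset.mem_image] at hb
  obtain ⟨a, _, rfl⟩ := hb
  exact a.isLt

/-- The subset of `Fin n` given by the bits of `k`. -/
def toSet (n k : ℕ) : Finset (Fin n) := Finset.univ.filter (fun i : Fin n => k.testBit i)

/-- The monomial `∏_{i ∈ bits(j)} x_i`. -/
def Mon (n j : ℕ) (x : Fin n → ZMod 2) : ZMod 2 := ∏ i ∈ toSet n j, x i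

/-- Encoding of `z : Fin n → ZMod 2` as a natural number. -/
def enc {n : ℕ} (z : Fin n → ZMod 2) : ℕ := eS (Finset.univ.filter (fun i => z i = 1))

lemma toSet_eS {n : ℕ} (S : Finset (Fin n)) : toSet n (eS S) = S := by
  ext i
  simp [toSet, eS_testBit_fin]

lemma eS_injective {n : ℕ} : Function.Injective (eS (n := n)) := by
  intro S T h
  rw [← toSet_eS S, ← toSet_eS T, h]

lemma eS_toSet {n k : ℕ} (hk : k < 2^n) : eS (toSet n k) = k := by
  apply Nat.eq_of_testBit_eq
  intro i
  by_cases hi : i < n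
  · rw [eS_testBit]
    simp only [toSet, Finset.mem_filter, Finset.mem_univ, true_and]
    simp [hi]
  · rw [eS_testBit]
    have h1 : k < 2^i := lt_of_lt_of_le hk (Nat.pow_le_pow_right (by norm_num) (by omega))
    rw [Nat.testBit_lt_two_pow h1]
    simp [hi]

lemma image_eS : ∀ (n : ℕ), (Finset.univ : Finset (Finset (Fin n))).image eS = Finset.range (2^n) := by
  intro n
  apply Finset.eq_of_subset_of_card_le
  · intro k hk
    simp only [Finset.mem_image] at hk
    obtain ⟨S, _, rfl⟩ := hk
    exact Finset.mem_range.mpr (eS_lt S)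
  · rw [Finset.card_range, Finset.card_image_of_injective _ eS_injective]
    simp [Fintype.card_finset]

lemma land_eS_iff {n : ℕ} (S T : Finset (Fin n)) : eS S &&& eS T = eS S ↔ S ⊆ T := by
  constructor
  · intro h i hi
    have := congrArg (fun m => m.testBit (i : ℕ)) h
    simp only [Nat.testBit_land, eS_testBit_fin] at this
    simp only [hi] at this
    simpa using this
  · intro h
    apply Nat.eq_of_testBit_eq
    intro i
    rw [Nat.testBit_land]
    by_cases hi : i < n
    · rw [eS_testBit, eS_testBit]
      by_cases hmem : (⟨i, hi⟩ : Fin n) ∈ S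
      · simp [hi, hmem, h hmem]
      · simp [hi, hmem]
    · have h1 : (eS S).testBit i = false := by
        rw [eS_testBit]; simp [hi]
      simp [h1]

lemma zmod2_factor : ∀ a b : ZMod 2, a + (1 + b) = if a = b then 1 else 0 := by decide

lemma indicator_id (n : ℕ) (x z : Fin n → ZMod 2) :
    ∑ k ∈ Finset.range (2^n), (if enc z &&& k = enc z then Mon n k x else 0)
      = if x = z then 1 else 0 := by
  classical
  set Z : Finset (Fin n) := Finset.univ.filter (fun i => z i = 1) with hZ
  have htransfer : ∑ k ∈ Finset.range (2^n), (if enc z &&& k = enc z then Mon n k x else 0)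
      = ∑ S ∈ (Finset.univ : Finset (Finset (Fin n))),
          (if enc z &&& eS S = enc z then Mon n (eS S) x else 0) := by
    rw [← image_eS n, Finset.sum_image (fun a _ b _ h => eS_injective h)]
  rw [htransfer]
  have hcond : ∀ S : Finset (Fin n), (enc z &&& eS S = enc z) ↔ Z ⊆ S := by
    intro S
    rw [enc, ← hZ]
    exact land_eS_iff Z S
  have hmon : ∀ S : Finset (Fin n), Mon n (eS S) x = ∏ i ∈ S, x i := by
    intro S; rw [Mon, toSet_eS]
  have hstep : ∀ S : Finset (Fin n),
      (if enc z &&& eS S = enc z then Mon n (eS S) x else 0)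
        = (∏ i ∈ S, x i) * ∏ i ∈ Finset.univ \ S, (1 + z i) := by
    intro S
    rw [hmon S]
    by_cases hsub : Z ⊆ S
    · rw [if_pos ((hcond S).mpr hsub)]
      have : ∏ i ∈ Finset.univ \ S, (1 + z i) = 1 := by
        apply Finset.prod_eq_one
        intro i hi
        have hiZ : i ∉ Z := fun h => (Finset.mem_sdiff.mp hi).2 (hsub h)
        have hne : z i ≠ 1 := by
          intro h; exact hiZ (by simp [hZ, h])
        have hz0 : z i = 0 := by
          have : ∀ a : ZMod 2, a ≠ 1 → a = 0 := by decide
          exact this _ hne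
        rw [hz0]; decide
      rw [this, mul_one]
    · rw [if_neg (fun h => hsub ((hcond S).mp h))]
      obtain ⟨i, hiZ, hiS⟩ := Finset.not_subset.mp hsub
      have hz1 : z i = 1 := (Finset.mem_filter.mp hiZ).2
      have : ∏ i ∈ Finset.univ \ S, (1 + z i) = 0 := by
        apply Finset.prod_eq_zero (Finset.mem_sdiff.mpr ⟨Finset.mem_univ i, hiS⟩)
        rw [hz1]; decide
      rw [this, mul_zero]
  rw [Finset.sum_congr rfl (fun S _ => hstep S)]
  rw [← Finset.powerset_univ, ← Finset.prod_add]
  have : ∀ i, x i + (1 + z i) = if x i = z i then 1 else 0 := fun i => zmod2_factor _ _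
  by_cases hxz : x = z
  · subst hxz
    rw [if_pos rfl]
    apply Finset.prod_eq_one
    intro i _
    rw [this i, if_pos rfl]
  · rw [if_neg hxz]
    obtain ⟨i, hi⟩ := Function.ne_iff.mp hxz
    apply Finset.prod_eq_zero (Finset.mem_univ i)
    rw [this i, if_neg hi]

-- ## The program
def mbase (n : ℕ) : ℕ := n + 2
def cbase (n : ℕ) : ℕ := n + 2 + 2^n
def totLen (n : ℕ) : ℕ := n + 2 + 2^n + 2^n * 2^n
def chainPos (n j k : ℕ) : ℕ := cbase n + (2^n * j + k)

def instrAt (n t : ℕ) : Instr :=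
  if t < n then .var t
  else if t = n then .one
  else if t = n + 1 then .xor n n
  else if t < cbase n then
    (let j := t - mbase n;
     if j = 0 then .one
     else if j = 2 ^ Nat.log 2 j then .var (Nat.log 2 j)
     else .and (mbase n + (j - 2 ^ Nat.log 2 j)) (Nat.log 2 j))
  else
    (let u := t - cbase n;
     .xor (if u % 2^n = 0 then n + 1 else t - 1)
          (if (u / 2^n) &&& (u % 2^n) = u / 2^n then mbase n + u % 2^n else n + 1))

def prog (n : ℕ) : List Instr := List.ofFn (fun t : Fin (totLen n) => instrAt n (t : ℕ))

lemma length_prog (n : ℕ) : (prog n).length = totLen n := by simp [prog]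

lemma prog_getD (n : ℕ) {t : ℕ} (h : t < totLen n) :
    (prog n).getD t Instr.one = instrAt n t := by
  rw [List.getD_eq_getElem _ _ (by rw [length_prog]; exact h)]
  simp [prog]

def Vv (n : ℕ) (x : Fin n → ZMod 2) (t : ℕ) : ZMod 2 := (evalProg n x (prog n)).getD t 0

lemma Vv_step (n : ℕ) (x : Fin n → ZMod 2) {t : ℕ} (h : t < totLen n) :
    Vv n x t = stepEval n x (evalProg n x ((prog n).take t)) (instrAt n t) := by
  rw [Vv, wire_recurrence n x _ (by rw [length_prog]; exact h), prog_getD n h]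

lemma Vv_read (n : ℕ) (x : Fin n → ZMod 2) {a t : ℕ} (ha : a < t) (ht : t ≤ totLen n) :
    (evalProg n x ((prog n).take t)).getD a 0 = Vv n x a :=
  getD_evalProg_take n x _ ha (by rw [length_prog]; exact ht)

-- region facts
lemma mbase_lt_totLen (n : ℕ) {j : ℕ} (hj : j < 2^n) : mbase n + j < totLen n := by
  have := Nat.one_le_two_pow (n := n)
  have : 2^n * 1 ≤ 2^n * 2^n := Nat.mul_le_mul_left _ this
  simp only [mbase, totLen]
  omega

lemma chainPos_lt_totLen (n : ℕ) {j k : ℕ} (hj : j < 2^n) (hk : k < 2^n) :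
    chainPos n j k < totLen n := by
  have h1 : 2^n * j + k < 2^n * (j+1) := by
    have : 2^n * (j+1) = 2^n * j + 2^n := by ring
    omega
  have h2 : 2^n * (j+1) ≤ 2^n * 2^n := Nat.mul_le_mul_left _ (by omega)
  simp only [chainPos, cbase, totLen]
  omega

lemma instrAt_var (n : ℕ) {t : ℕ} (h : t < n) : instrAt n t = .var t := by
  simp [instrAt, h]

lemma instrAt_one (n : ℕ) : instrAt n n = .one := by
  simp [instrAt]

lemma instrAt_zero (n : ℕ) : instrAt n (n + 1) = .xor n n := by
  simp [instrAt]

lemma instrAt_mono (n : ℕ) {j : ℕ} (hj : j < 2^n) :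
    instrAt n (mbase n + j) =
      (if j = 0 then .one
       else if j = 2 ^ Nat.log 2 j then .var (Nat.log 2 j)
       else .and (mbase n + (j - 2 ^ Nat.log 2 j)) (Nat.log 2 j)) := by
  have h1 : ¬ (mbase n + j < n) := by simp [mbase]; omega
  have h2 : mbase n + j ≠ n := by simp [mbase]; omega
  have h3 : mbase n + j ≠ n + 1 := by simp [mbase]; omega
  have h4 : mbase n + j < cbase n := by simp [mbase, cbase]; omega
  have h5 : mbase n + j - mbase n = j := by omega
  simp only [instrAt, if_neg h1, if_neg h2, if_neg h3, if_pos h4, h5]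

lemma instrAt_chain (n : ℕ) {j k : ℕ} (hj : j < 2^n) (hk : k < 2^n) :
    instrAt n (chainPos n j k) =
      .xor (if k = 0 then n + 1 else chainPos n j k - 1)
           (if j &&& k = j then mbase n + k else n + 1) := by
  have hpos : 0 < 2^n := Nat.two_pow_pos n
  have h1 : ¬ (chainPos n j k < n) := by simp [chainPos, cbase]; omega
  have h2 : chainPos n j k ≠ n := by simp [chainPos, cbase]; omega
  have h3 : chainPos n j k ≠ n + 1 := by simp [chainPos, cbase]; omega
  have h4 : ¬ (chainPos n j k < cbase n) := by simp [chainPos]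
  have h5 : chainPos n j k - cbase n = 2^n * j + k := by
    simp [chainPos]
  have hdiv : (2^n * j + k) / 2^n = j := by
    rw [Nat.mul_add_div hpos, Nat.div_eq_of_lt hk, Nat.add_zero]
  have hmod : (2^n * j + k) % 2^n = k := by
    rw [Nat.mul_add_mod, Nat.mod_eq_of_lt hk]
  simp only [instrAt, if_neg h1, if_neg h2, if_neg h3, if_neg h4, h5, hdiv, hmod]

lemma testBit_pow_add {m j i : ℕ} (h : j < 2^m) :
    (2^m + j).testBit i = (decide (i = m) || j.testBit i) := by
  rcases lt_trichotomy i m with hi | rfl | hi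
  · rw [Nat.testBit_two_pow_add_gt hi]
    have : i ≠ m := by omega
    simp [this]
  · rw [Nat.testBit_two_pow_add_eq, Nat.testBit_lt_two_pow h]
    simp
  · have h1 : 2^m + j < 2^i := by
      have h2 : (2:ℕ)^(m+1) ≤ 2^i := Nat.pow_le_pow_right (by norm_num) hi
      have h3 : (2:ℕ)^(m+1) = 2^m + 2^m := by ring
      omega
    rw [Nat.testBit_lt_two_pow h1, Nat.testBit_lt_two_pow (lt_of_lt_of_le (lt_of_lt_of_le h (Nat.pow_le_pow_right (by norm_num) (by omega))) (le_refl _))]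
    have : i ≠ m := by omega
    simp [this]

lemma n_lt_totLen (n : ℕ) : n + 1 < totLen n := by
  have := Nat.one_le_two_pow (n := n)
  simp only [totLen]; omega

lemma Vv_var (n : ℕ) (x : Fin n → ZMod 2) {t : ℕ} (h : t < n) : Vv n x t = x ⟨t, h⟩ := by
  rw [Vv_step n x (by have := n_lt_totLen n; omega), instrAt_var n h]
  simp [stepEval, h]

lemma Vv_one (n : ℕ) (x : Fin n → ZMod 2) : Vv n x n = 1 := by
  rw [Vv_step n x (by have := n_lt_totLen n; omega), instrAt_one n]
  rfl

lemma Vv_zero (n : ℕ) (x : Fin n → ZMod 2) : Vv n x (n + 1) = 0 := by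
  rw [Vv_step n x (n_lt_totLen n), instrAt_zero n]
  simp only [stepEval]
  rw [Vv_read n x (by omega) (le_of_lt (n_lt_totLen n)), Vv_one]
  decide

lemma Vv_mono (n : ℕ) (x : Fin n → ZMod 2) : ∀ j, j < 2^n → Vv n x (mbase n + j) = Mon n j x := by
  intro j
  induction j using Nat.strong_induction_on with
  | _ j ih =>
    intro hj
    rw [Vv_step n x (mbase_lt_totLen n hj), instrAt_mono n hj]
    by_cases hj0 : j = 0
    · subst hj0
      rw [if_pos rfl]
      have : toSet n 0 = ∅ := by
        ext i; simp [toSet, Nat.zero_testBit]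
      simp [stepEval, Mon, this]
    · rw [if_neg hj0]
      by_cases hjp : j = 2 ^ Nat.log 2 j
      · rw [if_pos hjp]
        set m := Nat.log 2 j with hm
        have hmn : m < n := by
          rw [← Nat.pow_lt_pow_iff_right (a := 2) (by norm_num)]
          omega
        have htoSet : toSet n j = {⟨m, hmn⟩} := by
          ext i
          simp only [toSet, Finset.mem_filter, Finset.mem_univ, true_and, Finset.mem_singleton]
          rw [hjp, Nat.testBit_two_pow]
          rw [Fin.ext_iff]
          simp [eq_comm]
        simp only [stepEval, dif_pos hmn]
        rw [Mon, htoSet, Finset.prod_singleton]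
      · rw [if_neg hjp]
        set m := Nat.log 2 j with hm
        have hp : 2^m ≤ j := Nat.pow_log_le_self 2 hj0
        have hq : j < 2^(m+1) := Nat.lt_pow_succ_log_self (by norm_num) j
        have hexp : (2:ℕ)^(m+1) = 2^m + 2^m := by ring
        set j' := j - 2^m with hj'def
        have hj'lt : j' < 2^m := by omega
        have hj'j : j' < j := by
          have : 0 < 2^m := Nat.two_pow_pos m
          omega
        have hmn : m < n := by
          rw [← Nat.pow_lt_pow_iff_right (a := 2) (by norm_num)]
          omega
        simp only [stepEval]
        rw [Vv_read n x (by simp [mbase]; omega) (le_of_lt (mbase_lt_totLen n hj))]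
        rw [Vv_read n x (by simp [mbase]; omega) (le_of_lt (mbase_lt_totLen n hj))]
        rw [ih j' hj'j (by omega), Vv_var n x hmn]
        have hdecomp : j = 2^m + j' := by omega
        have hnot : (⟨m, hmn⟩ : Fin n) ∉ toSet n j' := by
          simp [toSet, Nat.testBit_lt_two_pow hj'lt]
        have hins : toSet n j = insert (⟨m, hmn⟩ : Fin n) (toSet n j') := by
          ext i
          simp only [toSet, Finset.mem_filter, Finset.mem_univ, true_and, Finset.mem_insert]
          rw [hdecomp, testBit_pow_add hj'lt]
          rw [Fin.ext_iff]
          simp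
        simp only [Mon]
        rw [hins, Finset.prod_insert hnot]
        exact mul_comm _ _

lemma Vv_chain (n : ℕ) (x : Fin n → ZMod 2) {j : ℕ} (hj : j < 2^n) :
    ∀ k, k < 2^n → Vv n x (chainPos n j k) =
      ∑ k' ∈ Finset.range (k+1), (if j &&& k' = j then Mon n k' x else 0) := by
  intro k
  induction k with
  | zero =>
    intro hk
    rw [Vv_step n x (chainPos_lt_totLen n hj hk), instrAt_chain n hj hk]
    simp only [stepEval, eq_self_iff_true, if_true]
    have hn1 : n + 1 < chainPos n j 0 := by simp [chainPos, cbase]; omega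
    have htot := le_of_lt (chainPos_lt_totLen n hj hk)
    rw [Vv_read n x hn1 htot, Vv_zero]
    rw [Finset.sum_range_one]
    by_cases hc : j &&& 0 = j
    · rw [if_pos hc, if_pos hc]
      have hmb : mbase n + 0 < chainPos n j 0 := by simp [chainPos, mbase, cbase]; omega
      rw [Vv_read n x hmb htot, Vv_mono n x 0 (Nat.two_pow_pos n)]
      rw [zero_add]
    · rw [if_neg hc, if_neg hc]
      rw [Vv_read n x hn1 htot, Vv_zero]
      rw [zero_add]
  | succ k ihk =>
    intro hk1
    have hk : k < 2^n := by omega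
    rw [Vv_step n x (chainPos_lt_totLen n hj hk1), instrAt_chain n hj hk1]
    simp only [stepEval, if_neg (Nat.succ_ne_zero k)]
    have hprev : chainPos n j (k+1) - 1 = chainPos n j k := by
      simp only [chainPos]; omega
    have hprevlt : chainPos n j (k+1) - 1 < chainPos n j (k+1) := by
      simp only [chainPos]; omega
    have htot := le_of_lt (chainPos_lt_totLen n hj hk1)
    rw [Vv_read n x hprevlt htot, hprev, ihk hk]
    conv_rhs => rw [Finset.sum_range_succ]
    congr 1
    by_cases hc : j &&& (k+1) = j
    · rw [if_pos hc, if_pos hc]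
      have hmb : mbase n + (k+1) < chainPos n j (k+1) := by
        simp only [chainPos, mbase, cbase]; omega
      rw [Vv_read n x hmb htot, Vv_mono n x (k+1) hk1]
    · rw [if_neg hc, if_neg hc]
      have hn1 : n + 1 < chainPos n j (k+1) := by simp [chainPos, cbase]; omega
      rw [Vv_read n x hn1 htot, Vv_zero]

lemma isAnd_instrAt (n t : ℕ) :
    ((instrAt n t).isAnd = true) ↔
      (mbase n ≤ t ∧ t < cbase n ∧ t - mbase n ≠ 0
        ∧ t - mbase n ≠ 2 ^ Nat.log 2 (t - mbase n)) := by
  simp only [instrAt]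
  split_ifs with h1 h2 h3 h4 h5 h6 <;> simp [Instr.isAnd, mbase, cbase] at * <;> omega

lemma andIdx_image (n : ℕ) :
    (Finset.range (totLen n)).filter (fun t => (instrAt n t).isAnd) =
      ((Finset.range (2^n)).filter
          (fun j => ¬(j = 0 ∨ j = 2 ^ Nat.log 2 j))).image (fun j => mbase n + j) := by
  ext t
  simp only [Finset.mem_filter, Finset.mem_range, Finset.mem_image, isAnd_instrAt]
  constructor
  · rintro ⟨htl, hmb, hcb, h0, hp⟩
    refine ⟨t - mbase n, ⟨?_, ?_⟩, by omega⟩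
    · simp only [mbase, cbase] at *; omega
    · push_neg
      exact ⟨h0, hp⟩
  · rintro ⟨j, ⟨hj, hcond⟩, rfl⟩
    push_neg at hcond
    have h5 : mbase n + j - mbase n = j := by omega
    refine ⟨mbase_lt_totLen n hj, by omega, ?_, ?_, ?_⟩
    · simp only [mbase, cbase]; omega
    · rw [h5]; exact hcond.1
    · rw [h5]; exact hcond.2

lemma trivial_filter (n : ℕ) :
    (Finset.range (2^n)).filter (fun j => (j = 0 ∨ j = 2 ^ Nat.log 2 j))
      = insert 0 ((Finset.range n).image (fun m => 2^m)) := by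
  ext j
  simp only [Finset.mem_filter, Finset.mem_range, Finset.mem_insert, Finset.mem_image]
  constructor
  · rintro ⟨hj, (rfl | hp)⟩
    · exact Or.inl rfl
    · right
      refine ⟨Nat.log 2 j, ?_, hp.symm⟩
      rw [← Nat.pow_lt_pow_iff_right (a := 2) (by norm_num)]
      omega
  · rintro (rfl | ⟨m, hm, rfl⟩)
    · exact ⟨Nat.two_pow_pos n, Or.inl rfl⟩
    · refine ⟨(Nat.pow_lt_pow_iff_right (a := 2) (by norm_num)).mpr hm, Or.inr ?_⟩
      rw [Nat.log_pow (by norm_num)]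

lemma card_trivial_filter (n : ℕ) :
    ((Finset.range (2^n)).filter (fun j => (j = 0 ∨ j = 2 ^ Nat.log 2 j))).card = n + 1 := by
  rw [trivial_filter]
  rw [Finset.card_insert_of_notMem]
  · rw [Finset.card_image_of_injective _ (fun a b h => Nat.pow_right_injective (le_refl 2) h)]
    simp [add_comm]
  · simp only [Finset.mem_image]
    rintro ⟨m, _, hm⟩
    exact (Nat.two_pow_pos m).ne' hm

lemma andCount_prog (n : ℕ) : andCount (prog n) = 2^n - n - 1 := by
  have h1 : andCount (prog n) = (prog n).countP Instr.isAnd := by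
    rw [andCount, List.countP_eq_length_filter]
  rw [h1, ← idx_count Instr.isAnd Instr.one (prog n), length_prog]
  have h2 : (Finset.range (totLen n)).filter (fun t => ((prog n).getD t Instr.one).isAnd)
      = (Finset.range (totLen n)).filter (fun t => (instrAt n t).isAnd) := by
    apply Finset.filter_congr
    intro t ht
    rw [prog_getD n (Finset.mem_range.mp ht)]
  rw [h2, andIdx_image,
    Finset.card_image_of_injective _ (fun a b h => by omega)]
  have h3 := Finset.card_filter_add_card_filter_not
    (s := Finset.range (2^n)) (p := fun j => (j = 0 ∨ j = 2 ^ Nat.log 2 j))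
  rw [card_trivial_filter, Finset.card_range] at h3
  omega

theorem upper_bound (n : ℕ) (hn : 1 < n) :
    ∃ (P : List Instr) (out : (Fin n → ZMod 2) → ℕ),
      (∀ x z, (evalProg n x P).getD (out z) 0 = if x = z then 1 else 0) ∧
        andCount P = 2 ^ n - n - 1 := by
  refine ⟨prog n, fun z => chainPos n (enc z) (2^n - 1), ?_, andCount_prog n⟩
  intro x z
  have hz : enc z < 2^n := eS_lt _
  have hone : 1 ≤ 2^n := Nat.one_le_two_pow
  have hk : 2^n - 1 < 2^n := by omega
  have := Vv_chain n x hz (2^n - 1) hk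
  rw [Vv] at this
  rw [this]
  have hsub : 2^n - 1 + 1 = 2^n := by omega
  rw [hsub]
  exact indicator_id n x z


/-- For n > 1, the (n, 2^n)-function of all indicator functions has
multiplicative complexity exactly 2^n - n - 1. -/
theorem indicators_mult_complexity (n : ℕ) (hn : 1 < n) :
    (∃ (P : List Instr) (out : (Fin n → ZMod 2) → ℕ),
        (∀ x z, (evalProg n x P).getD (out z) 0 = if x = z then 1 else 0) ∧
          andCount P = 2 ^ n - n - 1) ∧
      ∀ (P : List Instr) (out : (Fin n → ZMod 2) → ℕ),
        (∀ x z, (evalProg n x P).getD (out z) 0 = if x = z then 1 else 0) →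
          2 ^ n - n - 1 ≤ andCount P := by
  exact ⟨upper_bound n hn, fun P out h => lower_bound n hn P out h⟩
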